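/- There exists an absolute constant x₀ such that for all reals x ≥ x₀, all integers m, n with 1 ≤ m < n, and all real k ≥ 1: with B(x) = 2√(m(x+√x))/k − 2√(nx)/k, one has |B'(x)| ≥ (3/4)·(√n − √m)/(k√x). -/

import Mathlib

open Real

set_option maxHeartbeats 800000

theorem stmt6 :
    ∃ x₀ : ℝ, ∀ x : ℝ, x₀ ≤ x → ∀ m n : ℕ, 1 ≤ m → m < n → (n:ℝ) ≤ x → ∀ k : ℝ, 1 ≤ k →
      (3/4) * (Real.sqrt n - Real.sqrt m)/(k*Real.sqrt x) ≤
        |deriv (fun y => 2*Real.sqrt ((m:ℝ)*(y+Real.sqrt y))/k - 2*Real.sqrt ((n:ℝ)*y)/k) x| := by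
  use 1
  intro x hx m n hm hmn hnx k hk
  have hx0 : (0:ℝ) < x := lt_of_lt_of_le one_pos hx
  have hk0 : (0:ℝ) < k := lt_of_lt_of_le one_pos hk
  set s := Real.sqrt x with hs
  have hs0 : 0 < s := Real.sqrt_pos.2 hx0
  have hs1 : 1 ≤ s := by
    rw [hs, show (1:ℝ) = Real.sqrt 1 by simp]
    exact Real.sqrt_le_sqrt hx
  have hss : s * s = x := Real.mul_self_sqrt hx0.le
  have hm0 : (0:ℝ) < m := by exact_mod_cast Nat.lt_of_lt_of_le Nat.zero_lt_one hm
  have hn0 : (0:ℝ) < n := by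
    have : 0 < n := Nat.lt_of_lt_of_le Nat.zero_lt_one (le_of_lt (Nat.lt_of_le_of_lt hm hmn))
    exact_mod_cast this
  have hmn' : (m:ℝ) + 1 ≤ n := by exact_mod_cast hmn
  have hmx : (m:ℝ) ≤ x - 1 := by linarith
  have hxs0 : 0 < x + s := by linarith
  have hgm0 : 0 < (m:ℝ) * (x + s) := mul_pos hm0 hxs0
  have hgn0 : 0 < (n:ℝ) * x := mul_pos hn0 hx0
  -- derivative computation
  have hsd : HasDerivAt Real.sqrt (1/(2*s)) x := Real.hasDerivAt_sqrt (ne_of_gt hx0)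
  have h1 : HasDerivAt (fun y => (m:ℝ)*(y + Real.sqrt y)) ((m:ℝ)*(1 + 1/(2*s))) x :=
    ((hasDerivAt_id x).add hsd).const_mul _
  have h2 : HasDerivAt (fun y => Real.sqrt ((m:ℝ)*(y+Real.sqrt y)))
      ((m:ℝ)*(1 + 1/(2*s)) / (2*Real.sqrt ((m:ℝ)*(x+s)))) x :=
    h1.sqrt (ne_of_gt hgm0)
  have h3 : HasDerivAt (fun y => (n:ℝ)*y) (n:ℝ) x := by
    simpa using (hasDerivAt_id x).const_mul (n:ℝ)
  have h4 : HasDerivAt (fun y => Real.sqrt ((n:ℝ)*y)) ((n:ℝ)/(2*Real.sqrt ((n:ℝ)*x))) x :=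
    h3.sqrt (ne_of_gt hgn0)
  have hB : HasDerivAt (fun y => 2*Real.sqrt ((m:ℝ)*(y+Real.sqrt y))/k - 2*Real.sqrt ((n:ℝ)*y)/k)
      (2*((m:ℝ)*(1 + 1/(2*s)) / (2*Real.sqrt ((m:ℝ)*(x+s))))/k
        - 2*((n:ℝ)/(2*Real.sqrt ((n:ℝ)*x)))/k) x :=
    ((h2.const_mul 2).div_const k).sub ((h4.const_mul 2).div_const k)
  rw [hB.deriv]
  -- simplify the square roots
  have hA : Real.sqrt ((m:ℝ)*(x+s)) = Real.sqrt m * Real.sqrt (x+s) :=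
    Real.sqrt_mul (le_of_lt hm0) _
  have hC : Real.sqrt ((n:ℝ)*x) = Real.sqrt n * s :=
    Real.sqrt_mul (le_of_lt hn0) _
  set a := Real.sqrt (m:ℝ) with ha
  set b := Real.sqrt (n:ℝ) with hb
  have ha0 : 0 < a := Real.sqrt_pos.2 hm0
  have hb0 : 0 < b := Real.sqrt_pos.2 hn0
  have ha2 : a * a = (m:ℝ) := Real.mul_self_sqrt hm0.le
  have hb2 : b * b = (n:ℝ) := Real.mul_self_sqrt hn0.le
  set T := Real.sqrt (x + s) with hT
  have hT0 : 0 < T := Real.sqrt_pos.2 hxs0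
  have hTT : T * T = x + s := Real.mul_self_sqrt hxs0.le
  rw [hA, hC]
  -- the derivative equals (a*(1+1/(2s))/T - b/s)/k
  have hEq : 2*((m:ℝ)*(1 + 1/(2*s)) / (2*(a * T)))/k - 2*((n:ℝ)/(2*(b * s)))/k
      = (a*(1 + 1/(2*s))/T - b/s)/k := by
    rw [← ha2, ← hb2]
    field_simp
  rw [hEq]
  -- bound |D| from below by -D
  have key : (3/4) * (b - a)/(k*s) ≤ -((a*(1 + 1/(2*s))/T - b/s)/k) := by
    have hab : a ≤ b := Real.sqrt_le_sqrt (by exact_mod_cast le_of_lt hmn)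
    have hbx : b * b ≤ x := by rw [hb2]; exact hnx
    have hax : a * a ≤ x - 1 := by rw [ha2]; exact hmx
    -- T is at least (s + 1/2)/(1 + 1/(8x))
    have hc' : s + 1/2 ≤ (1 + 1/(8*x)) * T := by
      have hd0 : (0:ℝ) < 1 + 1/(8*x) := by positivity
      have hpoly : (s + 1/2)^2 * (8*x)^2 ≤ (x + s) * (8*x+1)^2 := by
        have hx' : x = s * s := hss.symm
        rw [hx']
        nlinarith [pow_pos hs0 3, mul_pos hs0 hs0, hs0]
      have hcle : (s + 1/2)/(1 + 1/(8*x)) ≤ T := by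
        rw [hT, Real.le_sqrt (by positivity) hxs0.le]
        rw [show (1 + 1/(8*x)) = (8*x+1)/(8*x) by field_simp]
        rw [div_pow, div_le_iff₀ (by positivity : (0:ℝ) < ((8*x+1)/(8*x))^2)]
        calc (s + 1/2)^2 = (s + 1/2)^2 * (8*x)^2 / (8*x)^2 := by
              field_simp
          _ ≤ (x + s) * (8*x+1)^2 / (8*x)^2 := by gcongr
          _ = (x + s) * ((8*x+1)/(8*x))^2 := by
              rw [div_pow]; ring
      calc s + 1/2 = (1 + 1/(8*x)) * ((s + 1/2)/(1 + 1/(8*x))) := by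
            field_simp
        _ ≤ (1 + 1/(8*x)) * T := by
            exact mul_le_mul_of_nonneg_left hcle hd0.le
    -- step 1 : a*(1+1/(2s))/T ≤ a*(1+1/(8x))/s
    have step1 : a*(1 + 1/(2*s))/T ≤ a*(1 + 1/(8*x))/s := by
      rw [div_le_div_iff₀ hT0 hs0]
      have hl : a*(1 + 1/(2*s)) * s = a * (s + 1/2) := by
        field_simp
      rw [hl]
      have := mul_le_mul_of_nonneg_left hc' ha0.le
      nlinarith [this]
    -- step 2 : (3/4)*(b-a)/s ≤ b/s - a*(1+1/(8x))/s
    have h2x : a ≤ 2*x*(b-a) := by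
      have h1' : a * 1 ≤ a * ((b-a)*(b+a)) := by
        apply mul_le_mul_of_nonneg_left _ ha0.le
        nlinarith
      have h2' : (b-a) * (a*(b+a)) ≤ (b-a) * (2*x) := by
        apply mul_le_mul_of_nonneg_left _ (by linarith)
        nlinarith
      nlinarith
    have step2 : (3/4)*(b-a)/s ≤ b/s - a*(1 + 1/(8*x))/s := by
      rw [div_sub_div _ _ (ne_of_gt hs0) (ne_of_gt hs0), div_le_div_iff₀ hs0 (by positivity)]
      have hq : a/(8*x) ≤ (b-a)/4 := by
        rw [div_le_div_iff₀ (by positivity) (by norm_num)]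
        linarith
      have hq' : a * (1/(8*x)) ≤ (b-a)/4 := by
        rw [mul_one_div]; exact hq
      nlinarith [hq', hs0, mul_pos hs0 hs0]
    have : (3/4)*(b-a)/s ≤ b/s - a*(1 + 1/(2*s))/T := by linarith
    have hdiv : (3/4)*(b-a)/s/k ≤ (b/s - a*(1 + 1/(2*s))/T)/k := by gcongr
    calc (3/4) * (b - a)/(k*s) = ((3/4)*(b-a)/s)/k := by
          rw [div_div]; ring_nf
      _ ≤ (b/s - a*(1 + 1/(2*s))/T)/k := hdiv
      _ = -((a*(1 + 1/(2*s))/T - b/s)/k) := by ring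
  exact le_trans key (neg_le_abs _)
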